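/- In the elliptic plane with the form ⟨x,y⟩ = x⁰y⁰+x¹y¹+x²y², let F₁ = (1,f,0), F₂ = (1,-f,0), f > 0. A point P = (1,x,y) satisfying d(P,F₁) + d(P,F₂) = 2a (with 2a > d(F₁,F₂) and a < π/2) satisfies x²/tan²(a) + y²/(1/((1+f²)cos²(a)) - 1) = 1. -/

import Mathlib

open Real

set_option maxHeartbeats 1000000

/-- Positive definite bilinear form on coordinate triples (elliptic plane). -/
def ell (u v : ℝ × ℝ × ℝ) : ℝ := u.1 * v.1 + u.2.1 * v.2.1 + u.2.2 * v.2.2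

/-- A point of the elliptic plane whose elliptic distances to the foci `F₁ = (1,f,0)`,
`F₂ = (1,-f,0)` sum to `2a` (with `2a` larger than the distance of the foci and `a < π/2`)
lies on the curve `x²/tan²a + y²/(1/((1+f²)cos²a) - 1) = 1`. -/
theorem stmt_7 (f a x y d₁ d₂ dF : ℝ)
    (hf : 0 < f) (ha' : a < π / 2)
    (hd₁ : 0 ≤ d₁) (hd₁' : d₁ ≤ π / 2) (hd₂ : 0 ≤ d₂) (hd₂' : d₂ ≤ π / 2)
    (hdF : 0 ≤ dF) (hdF' : dF ≤ π / 2)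
    (h₁ : Real.cos d₁ = ell (1, x, y) (1, f, 0) /
        Real.sqrt (ell (1, x, y) (1, x, y) * ell (1, f, 0) (1, f, 0)))
    (h₂ : Real.cos d₂ = ell (1, x, y) (1, -f, 0) /
        Real.sqrt (ell (1, x, y) (1, x, y) * ell (1, -f, 0) (1, -f, 0)))
    (hF : Real.cos dF = ell (1, f, 0) (1, -f, 0) /
        Real.sqrt (ell (1, f, 0) (1, f, 0) * ell (1, -f, 0) (1, -f, 0)))
    (hsum : d₁ + d₂ = 2 * a) (ha : 2 * a > dF) :
    x ^ 2 / Real.tan a ^ 2 +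
      y ^ 2 / (1 / ((1 + f ^ 2) * Real.cos a ^ 2) - 1) = 1 := by
  simp only [ell] at h₁ h₂ hF
  have hQ : (0:ℝ) < 1 + x^2 + y^2 := by positivity
  have hFpos : (0:ℝ) < 1 + f^2 := by positivity
  have hFeq : Real.cos dF = (1 - f^2) / (1 + f^2) := by
    rw [hF, show (1*1 + f*f + 0*0) * (1*1 + -f * -f + 0*0) = (1+f^2)^2 by ring,
      Real.sqrt_sq hFpos.le]
    ring_nf
  have ha0 : 0 < a := by linarith
  have hapi : 2 * a ≤ π := by linarith [Real.pi_pos]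
  have hcos2a : Real.cos (2*a) < Real.cos dF :=
    Real.cos_lt_cos_of_nonneg_of_le_pi hdF hapi ha
  have hcosa : 0 < Real.cos a := Real.cos_pos_of_mem_Ioo ⟨by linarith [Real.pi_pos], ha'⟩
  have hsina : 0 < Real.sin a := Real.sin_pos_of_pos_of_lt_pi ha0 (by linarith [Real.pi_pos])
  have hc2 : Real.cos (2*a) = 2 * Real.cos a ^ 2 - 1 := Real.cos_two_mul a
  have hlt1 : (1 + f^2) * Real.cos a ^ 2 < 1 := by
    rw [hFeq, hc2] at hcos2a
    have := (lt_div_iff₀ hFpos).mp hcos2a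
    nlinarith
  set S : ℝ := Real.sqrt ((1 + x^2 + y^2) * (1 + f^2)) with hSdef
  have hSpos : 0 < S := Real.sqrt_pos.mpr (by positivity)
  have hS2 : S ^ 2 = (1 + x^2 + y^2) * (1 + f^2) := Real.sq_sqrt (by positivity)
  have hSne : S ≠ 0 := hSpos.ne'
  have h₁' : Real.cos d₁ = (1 + f*x) / S := by rw [h₁, hSdef]; ring_nf
  have h₂' : Real.cos d₂ = (1 - f*x) / S := by rw [h₂, hSdef]; ring_nf
  clear_value S
  have hadd : Real.cos (2*a) = Real.cos d₁ * Real.cos d₂ - Real.sin d₁ * Real.sin d₂ := by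
    rw [← hsum, Real.cos_add]
  have hsq : (Real.cos d₁ * Real.cos d₂ - Real.cos (2*a)) ^ 2
      = (1 - Real.cos d₁ ^ 2) * (1 - Real.cos d₂ ^ 2) := by
    rw [← Real.sin_sq d₁, ← Real.sin_sq d₂]
    linear_combination (Real.cos (2*a) - Real.cos d₁ * Real.cos d₂
      - Real.sin d₁ * Real.sin d₂) * hadd
  rw [h₁', h₂'] at hsq
  field_simp at hsq
  rw [hc2, hS2] at hsq
  have hQF : ((1 + x^2 + y^2) * (1 + f^2)) ≠ 0 := by positivity
  have hsq' : ((1 + f*x) * (1 - f*x)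
        - ((1 + x^2 + y^2) * (1 + f^2)) * (2 * Real.cos a ^ 2 - 1)) ^ 2
      = (((1 + x^2 + y^2) * (1 + f^2)) - (1 + f*x)^2)
        * (((1 + x^2 + y^2) * (1 + f^2)) - (1 - f*x)^2) :=
    mul_right_cancel₀ (pow_ne_zero 2 hQF) (by linear_combination ((1 + x^2 + y^2) * (1 + f^2))^2 * hsq)
  -- key identity (cos-only form)
  have hkey0 : ((1 + x^2 + y^2) * (1 + f^2)) *
      ((1 + x^2 + y^2) * (1 + f^2) * (1 - Real.cos a ^ 2) * Real.cos a ^ 2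
        - ((1 - Real.cos a ^ 2) + f^2 * x^2 * Real.cos a ^ 2)) = 0 := by
    linear_combination (-(1:ℝ)/4) * hsq'
  have key : (1 + x^2 + y^2) * (1 + f^2) * (1 - Real.cos a ^ 2) * Real.cos a ^ 2
      = (1 - Real.cos a ^ 2) + f^2 * x^2 * Real.cos a ^ 2 := by
    rcases mul_eq_zero.mp hkey0 with h | h
    · exact absurd h (by positivity)
    · linarith
  -- finish
  have h1F : (0:ℝ) < 1 - (1 + f^2) * Real.cos a ^ 2 := by linarith
  have hpyth : Real.sin a ^ 2 = 1 - Real.cos a ^ 2 := Real.sin_sq a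
  have hcne : Real.cos a ≠ 0 := hcosa.ne'
  have hC : (0:ℝ) < Real.cos a ^ 2 := by positivity
  have hCle : Real.cos a ^ 2 ≤ (1 + f^2) * Real.cos a ^ 2 :=
    le_mul_of_one_le_left hC.le (by linarith [sq_nonneg f])
  have h1 : (0:ℝ) < 1 - Real.cos a ^ 2 := by linarith
  have hFC : (0:ℝ) < (1 + f^2) * Real.cos a ^ 2 := by positivity
  have hD : 1 / ((1 + f^2) * Real.cos a ^ 2) - 1
      = (1 - (1 + f^2) * Real.cos a ^ 2) / ((1 + f^2) * Real.cos a ^ 2) := by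
    rw [sub_div, div_self hFC.ne']
  rw [Real.tan_eq_sin_div_cos, div_pow, hpyth, hD,
    div_div_eq_mul_div, div_div_eq_mul_div, div_add_div _ _ h1.ne' h1F.ne',
    div_eq_one_iff_eq (by positivity)]
  linear_combination key
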